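/- If S_n carries the uniform probability measure, then the expected value of the tree realization number R(σ) = ∏_{i=1}^n l_i(σ) equals (n+1)!/2^n. -/

import Mathlib

open Finset

/-- The `i`-th entry of the left inversion vector: `l_i(σ) = #{j ≤ i : σ(j) ≥ σ(i)}`. -/
def linv {n : ℕ} (σ : Equiv.Perm (Fin n)) (i : Fin n) : ℕ :=
  (Finset.univ.filter (fun j : Fin n => j ≤ i ∧ σ i ≤ σ j)).card

/-- The tree realization number `R(σ) = ∏ᵢ l_i(σ)`. -/
def TRN {n : ℕ} (σ : Equiv.Perm (Fin n)) : ℕ := ∏ i, linv σ i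

lemma linv_pos {n : ℕ} (σ : Equiv.Perm (Fin n)) (i : Fin n) : 1 ≤ linv σ i := by
  rw [Nat.one_le_iff_ne_zero, linv, Ne, Finset.card_eq_zero, ← Ne,
    ← Finset.nonempty_iff_ne_empty]
  exact ⟨i, by simp⟩

lemma linv_le {n : ℕ} (σ : Equiv.Perm (Fin n)) (i : Fin n) : linv σ i ≤ (i : ℕ) + 1 := by
  have h : (Finset.univ.filter (fun j : Fin n => j ≤ i ∧ σ i ≤ σ j)) ⊆ Finset.Iic i := by
    intro j hj
    simp only [Finset.mem_filter] at hj
    exact Finset.mem_Iic.mpr hj.2.1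
  calc linv σ i ≤ (Finset.Iic i).card := Finset.card_le_card h
    _ = (i : ℕ) + 1 := Fin.card_Iic i

/-- The number of `j` with `σ j ≥ σ i` is `n - σ i`. -/
lemma card_ge {n : ℕ} (σ : Equiv.Perm (Fin n)) (i : Fin n) :
    (Finset.univ.filter (fun j : Fin n => σ i ≤ σ j)).card = n - (σ i : ℕ) := by
  rw [← Fin.card_Ici (σ i)]
  apply Finset.card_bij' (fun j _ => σ j) (fun v _ => σ.symm v)
  · intro j hj; simp only [Finset.mem_filter] at hj; exact Finset.mem_Ici.mpr hj.2
  · intro v hv; simp only [Finset.mem_filter, Finset.mem_univ, true_and, Equiv.apply_symm_apply]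
    exact Finset.mem_Ici.mp hv
  · intro j _; simp
  · intro v _; simp

lemma linv_add {n : ℕ} (σ : Equiv.Perm (Fin n)) (i : Fin n) :
    linv σ i + (Finset.univ.filter (fun j : Fin n => i < j ∧ σ i ≤ σ j)).card
      = n - (σ i : ℕ) := by
  rw [← card_ge σ i]
  have := Finset.card_filter_add_card_filter_not
    (s := Finset.univ.filter (fun j : Fin n => σ i ≤ σ j)) (p := fun j => j ≤ i)
  rw [Finset.filter_filter, Finset.filter_filter] at this
  rw [linv]
  have e1 : (Finset.univ.filter fun j : Fin n => j ≤ i ∧ σ i ≤ σ j)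
      = Finset.univ.filter fun j : Fin n => σ i ≤ σ j ∧ j ≤ i := by
    apply Finset.filter_congr; intro j _; exact and_comm
  have e2 : (Finset.univ.filter fun j : Fin n => i < j ∧ σ i ≤ σ j)
      = Finset.univ.filter fun j : Fin n => σ i ≤ σ j ∧ ¬ j ≤ i := by
    apply Finset.filter_congr; intro j _
    simp [not_le, and_comm]
  rw [e1, e2, this]

/-- Key step: if `σ` and `τ` agree after `i` and `σ i < τ i`, then `linv τ i < linv σ i`. -/
lemma key {n : ℕ} (σ τ : Equiv.Perm (Fin n)) (i : Fin n)
    (hagree : ∀ j, i < j → σ j = τ j) (hlt : σ i < τ i) :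
    linv τ i < linv σ i := by
  set a : ℕ := (σ i : ℕ) with ha
  set b : ℕ := (τ i : ℕ) with hb
  have hab : a < b := hlt
  have hbn : b < n := (τ i).isLt
  have h1 : linv σ i + (Finset.univ.filter (fun j : Fin n => i < j ∧ σ i ≤ σ j)).card
      = n - a := linv_add σ i
  have h2 : linv τ i + (Finset.univ.filter (fun j : Fin n => i < j ∧ τ i ≤ τ j)).card
      = n - b := linv_add τ i
  -- rewrite the σ-tail set using agreement
  have e0 : (Finset.univ.filter (fun j : Fin n => i < j ∧ σ i ≤ σ j))
      = Finset.univ.filter (fun j : Fin n => i < j ∧ σ i ≤ τ j) := by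
    apply Finset.filter_congr; intro j _
    constructor
    · rintro ⟨h, h'⟩; exact ⟨h, by rw [← hagree j h]; exact h'⟩
    · rintro ⟨h, h'⟩; exact ⟨h, by rw [hagree j h]; exact h'⟩
  -- split the σ-tail set by whether τ j ≥ τ i
  have hsplit := Finset.card_filter_add_card_filter_not
    (s := Finset.univ.filter (fun j : Fin n => i < j ∧ σ i ≤ τ j)) (p := fun j => τ i ≤ τ j)
  rw [Finset.filter_filter, Finset.filter_filter] at hsplit
  have e1 : (Finset.univ.filter fun j : Fin n => (i < j ∧ σ i ≤ τ j) ∧ τ i ≤ τ j)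
      = Finset.univ.filter fun j : Fin n => i < j ∧ τ i ≤ τ j := by
    apply Finset.filter_congr; intro j _
    constructor
    · rintro ⟨⟨h, _⟩, h''⟩; exact ⟨h, h''⟩
    · rintro ⟨h, h''⟩; exact ⟨⟨h, le_trans (le_of_lt hlt) h''⟩, h''⟩
  rw [e1] at hsplit
  set B := (Finset.univ.filter fun j : Fin n => (i < j ∧ σ i ≤ τ j) ∧ ¬ τ i ≤ τ j).card with hB
  -- bound B by the size of the integer interval (a, b)
  have hBle : B ≤ b - a - 1 := by
    rw [← Nat.card_Ioo a b]
    apply Finset.card_le_card_of_injOn (fun j => (τ j : ℕ))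
    · intro j hj
      simp only [Finset.coe_filter, Finset.mem_coe, Set.mem_setOf_eq, Finset.mem_filter, Finset.mem_univ, true_and, not_le] at hj
      obtain ⟨⟨hij, hle⟩, hlt'⟩ := hj
      rw [Finset.mem_coe, Finset.mem_Ioo]
      constructor
      · -- τ j > a : τ j ≥ σ i and τ j ≠ σ i
        have hne : τ j ≠ σ i := by
          rw [← hagree j hij]
          intro hcon
          exact (ne_of_gt hij) (σ.injective hcon)
        have : σ i < τ j := lt_of_le_of_ne hle (Ne.symm hne)
        exact this
      · exact hlt'
    · intro j₁ h₁ j₂ h₂ hval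
      exact τ.injective (Fin.val_injective hval)
  rw [e0] at h1
  omega

/-- The left inversion vector determines the permutation. -/
lemma linv_inj {n : ℕ} (σ τ : Equiv.Perm (Fin n)) (h : ∀ i, linv σ i = linv τ i) : σ = τ := by
  by_contra hne
  have hs : (Finset.univ.filter (fun i : Fin n => σ i ≠ τ i)).Nonempty := by
    rw [Finset.filter_nonempty_iff]
    by_contra hcon
    push_neg at hcon
    exact hne (Equiv.ext fun i => hcon i (Finset.mem_univ i))
  set i := Finset.max' _ hs with hi
  have himem := Finset.max'_mem _ hs
  simp only [Finset.mem_filter] at himem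
  have hagree : ∀ j, i < j → σ j = τ j := by
    intro j hij
    by_contra hj
    have : j ≤ i := Finset.le_max' _ j (by simp [hj])
    exact absurd hij (not_lt.mpr this)
  rcases lt_trichotomy (σ i) (τ i) with hc | hc | hc
  · exact absurd (h i) (ne_of_gt (key σ τ i hagree hc))
  · exact himem.2 hc
  · exact absurd (h i) (ne_of_lt (key τ σ i (fun j hj => (hagree j hj).symm) hc))

/-- The Lehmer code of a permutation. -/
def code {n : ℕ} (σ : Equiv.Perm (Fin n)) : ∀ i : Fin n, Fin ((i : ℕ) + 1) :=
  fun i => ⟨linv σ i - 1, by have := linv_le σ i; have := linv_pos σ i; omega⟩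

lemma code_bijective {n : ℕ} : Function.Bijective (code (n := n)) := by
  rw [Fintype.bijective_iff_injective_and_card]
  constructor
  · intro σ τ h
    apply linv_inj
    intro i
    have := congrFun h i
    have h1 := linv_pos σ i
    have h2 := linv_pos τ i
    have : linv σ i - 1 = linv τ i - 1 := congrArg Fin.val this
    omega
  · rw [Fintype.card_perm, Fintype.card_pi]
    simp only [Fintype.card_fin]
    rw [Fin.prod_univ_eq_prod_range (fun i => i + 1) n]
    exact (Finset.prod_range_add_one_eq_factorial n).symm

lemma sum_fin_q (m : ℕ) : ∑ k : Fin m, ((k : ℚ) + 1) = m * (m + 1) / 2 := by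
  induction m with
  | zero => simp
  | succ m ih =>
    rw [Fin.sum_univ_castSucc]
    simp only [Fin.coe_castSucc]
    push_cast
    rw [ih]
    ring

/-- Under the uniform measure on `S_n`, the expected tree realization number
is `(n+1)!/2^n`. -/
theorem stmt_3 (n : ℕ) :
    (∑ σ : Equiv.Perm (Fin n), (TRN σ : ℚ)) / (Nat.factorial n : ℚ) =
      (Nat.factorial (n + 1) : ℚ) / 2 ^ n := by
  have hsum : (∑ σ : Equiv.Perm (Fin n), (TRN σ : ℚ))
      = ∑ x : (∀ i : Fin n, Fin ((i : ℕ) + 1)), ∏ i, ((x i : ℚ) + 1) := by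
    apply Fintype.sum_bijective code code_bijective
    intro σ
    rw [TRN]
    push_cast
    apply Finset.prod_congr rfl
    intro i _
    have h1 := linv_pos σ i
    have hv : ((code σ i : ℕ)) + 1 = linv σ i := by
      show (linv σ i - 1) + 1 = linv σ i
      omega
    exact_mod_cast hv.symm
  have hswap : (∑ x : (∀ i : Fin n, Fin ((i : ℕ) + 1)), ∏ i, ((x i : ℚ) + 1))
      = ∏ i : Fin n, ∑ k : Fin ((i : ℕ) + 1), ((k : ℚ) + 1) := by
    rw [Finset.prod_univ_sum (fun i : Fin n => (Finset.univ : Finset (Fin ((i : ℕ) + 1))))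
      (fun i k => ((k : ℚ) + 1))]
    rw [Fintype.piFinset_univ]
  have hfn1 : ∏ i : Fin n, ((i : ℕ) + 1) = Nat.factorial n := by
    rw [Fin.prod_univ_eq_prod_range (fun i => i + 1) n]
    exact Finset.prod_range_add_one_eq_factorial n
  have hfn2 : ∏ i : Fin n, ((i : ℕ) + 2) = Nat.factorial (n + 1) := by
    rw [Fin.prod_univ_eq_prod_range (fun i => i + 2) n]
    have h := Finset.prod_range_succ' (fun i => i + 1) n
    rw [Finset.prod_range_add_one_eq_factorial (n + 1)] at h
    simpa using h.symm
  have hfact1 : (∏ i : Fin n, (((i : ℕ) : ℚ) + 1)) = (Nat.factorial n : ℚ) := by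
    rw [← hfn1, Nat.cast_prod]
    push_cast
    rfl
  have hfact2 : (∏ i : Fin n, (((i : ℕ) : ℚ) + 2)) = (Nat.factorial (n + 1) : ℚ) := by
    rw [← hfn2, Nat.cast_prod]
    push_cast
    rfl
  rw [hsum, hswap]
  have hterm : ∀ i : Fin n, ∑ k : Fin ((i : ℕ) + 1), ((k : ℚ) + 1)
      = (((i : ℕ) : ℚ) + 1) * (((i : ℕ) : ℚ) + 2) / 2 := by
    intro i
    rw [sum_fin_q ((i : ℕ) + 1)]
    push_cast
    ring
  rw [Finset.prod_congr rfl (fun i _ => hterm i)]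
  rw [Finset.prod_div_distrib, Finset.prod_mul_distrib, Finset.prod_const]
  rw [Finset.card_univ, Fintype.card_fin, hfact1, hfact2]
  have h1 : (Nat.factorial n : ℚ) ≠ 0 := by positivity
  have h2 : (2 : ℚ) ^ n ≠ 0 := by positivity
  field_simp
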